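/- Let Γ be a group in which every finite subgroup has order at most κ−1 for some fixed integer κ, and assume that the centralizer in Γ of every infinite subgroup is amenable. Let G = Γ × Γ act on Γ by left–right multiplication. Then for every subset F ⊂ Γ with |F| ≥ κ, the pointwise stabilizer Stab F ⊂ G is an amenable group. -/
import Mathlib

/-- A discrete group is amenable if it carries a left-invariant, finitely additive
probability measure defined on all subsets. -/
def IsAmenableGroup (G : Type*) [Group G] : Prop :=
  ∃ m : Set G → ℝ,
    m Set.univ = 1 ∧
    (∀ A : Set G, 0 ≤ m A) ∧
    (∀ A B : Set G, Disjoint A B → m (A ∪ B) = m A + m B) ∧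
    (∀ (g : G) (A : Set G), m ((g * ·) '' A) = m A)

/-- Amenability pulls back along injective homomorphisms. -/
lemma isAmenableGroup_of_injective {H G : Type*} [Group H] [Group G] (φ : H →* G)
    (hφ : Function.Injective φ) (hG : IsAmenableGroup G) : IsAmenableGroup H := by
  obtain ⟨m, hm1, hm0, hmadd, hminv⟩ := hG
  set s := QuotientGroup.rightRel φ.range with hs
  set T : Set G := Set.range (Quotient.out : Quotient s → G) with hT
  set FF : Set H → Set G := fun A => {x | ∃ a ∈ A, ∃ t ∈ T, x = φ a * t} with hFF
  have key : ∀ (a b : H) (t t' : G), t ∈ T → t' ∈ T → φ a * t = φ b * t' →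
      a = b ∧ t = t' := by
    intro a b t t' ht ht' heq
    obtain ⟨q, rfl⟩ := ht
    obtain ⟨q', rfl⟩ := ht'
    have hmem : q'.out * q.out⁻¹ ∈ φ.range := by
      refine ⟨b⁻¹ * a, ?_⟩
      simp only [map_mul, map_inv]
      calc (φ b)⁻¹ * φ a = (φ b)⁻¹ * ((φ a * q.out) * q.out⁻¹) := by group
        _ = (φ b)⁻¹ * ((φ b * q'.out) * q.out⁻¹) := by rw [heq]
        _ = q'.out * q.out⁻¹ := by group
    have hr : Setoid.r q.out q'.out := QuotientGroup.rightRel_apply.mpr hmem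
    have hq : q = q' := by
      rw [← Quotient.out_eq q, ← Quotient.out_eq q']
      exact Quotient.sound hr
    subst hq
    have : φ a = φ b := mul_right_cancel heq
    exact ⟨hφ this, rfl⟩
  have hdecomp : ∀ x : G, ∃ a : H, ∃ t ∈ T, x = φ a * t := by
    intro x
    have hout : Quotient.mk s (Quotient.mk s x).out = Quotient.mk s x := Quotient.out_eq _
    have hr : Setoid.r (Quotient.mk s x).out x := Quotient.exact hout
    obtain ⟨a, ha⟩ := QuotientGroup.rightRel_apply.mp hr
    refine ⟨a, (Quotient.mk s x).out, ⟨Quotient.mk s x, rfl⟩, ?_⟩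
    rw [ha]; group
  have hunion : ∀ A B : Set H, FF (A ∪ B) = FF A ∪ FF B := by
    intro A B
    ext x
    simp only [hFF, Set.mem_setOf_eq, Set.mem_union]
    constructor
    · rintro ⟨a, (ha | ha), t, ht, rfl⟩
      · exact Or.inl ⟨a, ha, t, ht, rfl⟩
      · exact Or.inr ⟨a, ha, t, ht, rfl⟩
    · rintro (⟨a, ha, t, ht, rfl⟩ | ⟨a, ha, t, ht, rfl⟩)
      · exact ⟨a, Or.inl ha, t, ht, rfl⟩
      · exact ⟨a, Or.inr ha, t, ht, rfl⟩
  have hdisj : ∀ A B : Set H, Disjoint A B → Disjoint (FF A) (FF B) := by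
    intro A B hAB
    rw [Set.disjoint_left]
    rintro x ⟨a, ha, t, ht, rfl⟩ ⟨b, hb, t', ht', heq⟩
    obtain ⟨rfl, rfl⟩ := key a b t t' ht ht' heq
    exact (Set.disjoint_left.mp hAB ha) hb
  have himg : ∀ (h : H) (A : Set H), FF ((h * ·) '' A) = (φ h * ·) '' FF A := by
    intro h A
    ext x
    simp only [hFF, Set.mem_setOf_eq, Set.mem_image]
    constructor
    · rintro ⟨a, ⟨b, hb, rfl⟩, t, ht, rfl⟩
      exact ⟨φ b * t, ⟨b, hb, t, ht, rfl⟩, by simp [map_mul, mul_assoc]⟩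
    · rintro ⟨y, ⟨a, ha, t, ht, rfl⟩, rfl⟩
      exact ⟨h * a, ⟨a, ha, rfl⟩, t, ht, by simp [map_mul, mul_assoc]⟩
  have huniv : FF Set.univ = Set.univ := by
    ext x
    simp only [hFF, Set.mem_setOf_eq, Set.mem_univ, iff_true]
    obtain ⟨a, t, ht, hx⟩ := hdecomp x
    exact ⟨a, trivial, t, ht, hx⟩
  refine ⟨fun A => m (FF A), ?_, fun A => hm0 _, ?_, ?_⟩
  · show m (FF Set.univ) = 1
    rw [huniv, hm1]
  · intro A B hAB
    show m (FF (A ∪ B)) = m (FF A) + m (FF B)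
    rw [hunion, hmadd _ _ (hdisj A B hAB)]
  · intro h A
    show m (FF ((h * ·) '' A)) = m (FF A)
    rw [himg, hminv]

/-- let `Γ` be a countable group in which every finite subgroup has order at
most `κ - 1`, and in which the centralizer of every infinite subgroup is amenable. Let
`G = Γ × Γ` act on `Γ` by left-right multiplication. Then for every subset `F ⊆ Γ` with
`|F| ≥ κ`, the pointwise stabilizer `Stab F` is an amenable group. -/
theorem stmt_8 {Γ : Type*} [Group Γ] [Countable Γ] (κ : ℕ) (hκ : 0 < κ)
    (hfin : ∀ S : Subgroup Γ, (S : Set Γ).Finite → (S : Set Γ).encard ≤ (κ - 1 : ℕ))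
    (hcent : ∀ S : Subgroup Γ, Infinite S →
      IsAmenableGroup (Subgroup.centralizer (S : Set Γ)))
    (F : Set Γ) (hF : (κ : ℕ∞) ≤ F.encard)
    (S : Subgroup (Γ × Γ))
    (hS : ∀ p : Γ × Γ, p ∈ S ↔ ∀ k ∈ F, p.1 * k * p.2⁻¹ = k) :
    IsAmenableGroup S := by
  -- F is nonempty
  have hFne : F.Nonempty := by
    rcases Set.eq_empty_or_nonempty F with h | h
    · rw [h, Set.encard_empty] at hF
      simp only [nonpos_iff_eq_zero, Nat.cast_eq_zero] at hF
      omega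
    · exact h
  obtain ⟨k₀, hk₀⟩ := hFne
  set D : Set Γ := (fun k => k * k₀⁻¹) '' F with hD
  set T : Subgroup Γ := Subgroup.closure D with hT
  -- T is infinite
  have hDcard : D.encard = F.encard := (mul_left_injective k₀⁻¹).encard_image F
  have hDT : D ⊆ (T : Set Γ) := Subgroup.subset_closure
  have hTinf : (T : Set Γ).Infinite := by
    by_contra hfin'
    rw [Set.not_infinite] at hfin'
    have h1 : (T : Set Γ).encard ≤ ((κ - 1 : ℕ) : ℕ∞) := hfin T hfin'
    have h2 : (κ : ℕ∞) ≤ (T : Set Γ).encard := by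
      calc (κ : ℕ∞) ≤ F.encard := hF
        _ = D.encard := hDcard.symm
        _ ≤ (T : Set Γ).encard := Set.encard_mono hDT
    have := le_trans h2 h1
    rw [Nat.cast_le] at this
    omega
  have : Infinite T := Set.infinite_coe_iff.mpr hTinf
  -- each first component lies in the centralizer of T
  have hcomm : ∀ p : Γ × Γ, p ∈ S → p.1 ∈ Subgroup.centralizer (T : Set Γ) := by
    intro p hp
    rw [Subgroup.mem_centralizer_iff]
    intro x hx
    have hle : T ≤ Subgroup.centralizer ({p.1} : Set Γ) := by
      rw [hT, Subgroup.closure_le]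
      rintro d ⟨k, hk, rfl⟩
      show k * k₀⁻¹ ∈ Subgroup.centralizer ({p.1} : Set Γ)
      rw [Subgroup.mem_centralizer_iff]
      intro g hg
      rw [Set.mem_singleton_iff] at hg
      subst hg
      have h1 : p.1 * k * p.2⁻¹ = k := (hS p).mp hp k hk
      have h2 : p.1 * k₀ * p.2⁻¹ = k₀ := (hS p).mp hp k₀ hk₀
      have h1' : p.1 * k = k * p.2 := by
        have := congrArg (· * p.2) h1
        simpa [mul_assoc] using this
      have h2' : p.1 * k₀ = k₀ * p.2 := by
        have := congrArg (· * p.2) h2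
        simpa [mul_assoc] using this
      calc p.1 * (k * k₀⁻¹) = (p.1 * k) * k₀⁻¹ := by rw [mul_assoc]
        _ = k * p.2 * k₀⁻¹ := by rw [h1']
        _ = k * k₀⁻¹ * (k₀ * p.2 * k₀⁻¹) := by group
        _ = k * k₀⁻¹ * (p.1 * k₀ * k₀⁻¹) := by rw [← h2']
        _ = k * k₀⁻¹ * p.1 := by group
    have h3 := hle hx
    rw [Subgroup.mem_centralizer_iff] at h3
    exact (h3 p.1 rfl).symm
  -- the injective homomorphism
  set C := Subgroup.centralizer (T : Set Γ) with hC
  have φmem : ∀ p : S, (p : Γ × Γ).1 ∈ C := fun p => hcomm p.val p.prop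
  set φ : S →* C :=
    { toFun := fun p => ⟨(p : Γ × Γ).1, φmem p⟩
      map_one' := rfl
      map_mul' := fun p q => rfl } with hφdef
  have hsnd : ∀ p : S, (p : Γ × Γ).2 = k₀⁻¹ * ((p : Γ × Γ).1 * k₀) := by
    intro p
    have h2 : (p : Γ × Γ).1 * k₀ * (p : Γ × Γ).2⁻¹ = k₀ := (hS p.val).mp p.prop k₀ hk₀
    have h2' : (p : Γ × Γ).1 * k₀ = k₀ * (p : Γ × Γ).2 := by
      have := congrArg (· * (p : Γ × Γ).2) h2
      simpa [mul_assoc] using this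
    rw [h2']; group
  have hφinj : Function.Injective φ := by
    intro p q h
    have h1 : (p : Γ × Γ).1 = (q : Γ × Γ).1 := congrArg Subtype.val h
    have h2 : (p : Γ × Γ).2 = (q : Γ × Γ).2 := by
      rw [hsnd p, hsnd q, h1]
    exact Subtype.ext (Prod.ext h1 h2)
  exact isAmenableGroup_of_injective φ hφinj (hcent T this)
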